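/- Let a, b, c, d ∈ ℝ with a²+b²+c²+d² = 1, let A be the 2×3 matrix [[a²+b²−c²−d², 2bc−2ad, 2bd+2ac], [2bc+2ad, a²−b²+c²−d², 2cd−2ab]] and I the 2×3 matrix [[1,0,0],[0,1,0]]. Let M₁ be the 6×9 block matrix [[A, −I, 0], [−I, A, 0], [0, 0, A−I]]. If a ≠ 0 and d ≠ 0, then M₁ has rank 6. -/

import Mathlib

/-- Assemble a 3×3 array of 2×3 blocks into a 6×9 matrix. -/
def blockMat (B : Fin 3 → Fin 3 → Matrix (Fin 2) (Fin 3) ℝ) : Matrix (Fin 6) (Fin 9) ℝ :=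
  Matrix.of fun i j =>
    B ⟨i.val / 2, by have := i.isLt; omega⟩ ⟨j.val / 3, by have := j.isLt; omega⟩
      ⟨i.val % 2, by omega⟩ ⟨j.val % 3, by omega⟩

lemma mul_sel (M : Matrix (Fin 6) (Fin 9) ℝ) (g : Fin 6 → Fin 9) :
    M * (Matrix.of fun j k => if j = g k then (1:ℝ) else 0) = M.submatrix id g := by
  ext i j
  simp [Matrix.mul_apply, mul_ite, mul_one, mul_zero, Finset.sum_ite_eq]

set_option maxHeartbeats 4000000 in
set_option maxRecDepth 8000 in
/-- The coefficient matrix M₁ = [[A,−I,0],[−I,A,0],[0,0,A−I]] for the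
one-two-cycle case has rank 6 whenever a ≠ 0 and d ≠ 0. -/
theorem stmt10 (a b c d : ℝ) (h : a^2 + b^2 + c^2 + d^2 = 1) (ha : a ≠ 0) (hd : d ≠ 0) :
    let A : Matrix (Fin 2) (Fin 3) ℝ :=
      !![a^2 + b^2 - c^2 - d^2, 2*b*c - 2*a*d, 2*b*d + 2*a*c;
         2*b*c + 2*a*d, a^2 - b^2 + c^2 - d^2, 2*c*d - 2*a*b]
    let I : Matrix (Fin 2) (Fin 3) ℝ := !![1, 0, 0; 0, 1, 0]
    let M₁ := blockMat ![![A, -I, 0], ![-I, A, 0], ![0, 0, A - I]]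
    M₁.rank = 6 := by
  intro A I M₁
  set S : Matrix (Fin 6) (Fin 6) ℝ :=
    !![a^2+b^2-c^2-d^2, 2*b*c-2*a*d, -1, 0, 0, 0;
       2*b*c+2*a*d, a^2-b^2+c^2-d^2, 0, -1, 0, 0;
       -1, 0, a^2+b^2-c^2-d^2, 2*b*c-2*a*d, 0, 0;
       0, -1, 2*b*c+2*a*d, a^2-b^2+c^2-d^2, 0, 0;
       0, 0, 0, 0, a^2+b^2-c^2-d^2-1, 2*b*c-2*a*d;
       0, 0, 0, 0, 2*b*c+2*a*d, a^2-b^2+c^2-d^2-1] with hS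
  have g : Fin 6 → Fin 9 := ![0, 1, 3, 4, 6, 7]
  have key : M₁.submatrix id ![0, 1, 3, 4, 6, 7] = S := by
    ext i j
    fin_cases i <;> fin_cases j <;>
      norm_num [hS, M₁, blockMat, A, I, Fin.val_mk, Fin.mk_one,
        Matrix.cons_val_zero, Matrix.cons_val_one, Matrix.head_cons,
        Matrix.cons_val_fin_one, Matrix.sub_apply,
        show ((0:Fin 9):ℕ) = 0 from rfl, show ((1:Fin 9):ℕ) = 1 from rfl,
        show ((3:Fin 9):ℕ) = 3 from rfl, show ((4:Fin 9):ℕ) = 4 from rfl,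
        show ((6:Fin 9):ℕ) = 6 from rfl, show ((7:Fin 9):ℕ) = 7 from rfl]
  have hdet : S.det = 64*a^2*d^4 := by
    have hsplit : S = ((Matrix.fromBlocks
        (!![a^2+b^2-c^2-d^2, 2*b*c-2*a*d, -1, 0;
            2*b*c+2*a*d, a^2-b^2+c^2-d^2, 0, -1;
            -1, 0, a^2+b^2-c^2-d^2, 2*b*c-2*a*d;
            0, -1, 2*b*c+2*a*d, a^2-b^2+c^2-d^2]) 0 0
        (!![a^2+b^2-c^2-d^2-1, 2*b*c-2*a*d;
            2*b*c+2*a*d, a^2-b^2+c^2-d^2-1])).submatrix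
        finSumFinEquiv.symm finSumFinEquiv.symm) := by
      ext i j
      fin_cases i <;> fin_cases j <;> rfl
    rw [hsplit, Matrix.det_submatrix_equiv_self, Matrix.det_fromBlocks_zero₂₁]
    have hB : (!![a^2+b^2-c^2-d^2, 2*b*c-2*a*d, -1, 0;
            2*b*c+2*a*d, a^2-b^2+c^2-d^2, 0, -1;
            -1, 0, a^2+b^2-c^2-d^2, 2*b*c-2*a*d;
            0, -1, 2*b*c+2*a*d, a^2-b^2+c^2-d^2] : Matrix (Fin 4) (Fin 4) ℝ).det
        = ((a^2+b^2-c^2-d^2)^2 - 1 + (2*b*c-2*a*d)*(2*b*c+2*a*d))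
          * ((a^2-b^2+c^2-d^2)^2 - 1 + (2*b*c-2*a*d)*(2*b*c+2*a*d))
          - ((a^2+b^2-c^2-d^2)*(2*b*c+2*a*d) + (2*b*c+2*a*d)*(a^2-b^2+c^2-d^2))
          * ((2*b*c-2*a*d)*(a^2-b^2+c^2-d^2) + (a^2+b^2-c^2-d^2)*(2*b*c-2*a*d)) := by
      simp [Matrix.det_succ_row_zero, Fin.sum_univ_succ, Fin.succAbove]
      ring
    rw [hB, Matrix.det_fin_two_of]
    linear_combination ((-1) + (-3)*d^2 + (-2)*d^4 + (2)*d^6 + (3)*d^8 + (1)*d^10 + (-1)*c^2 + (-4)*c^2*d^2 + (-6)*c^2*d^4 + (-4)*c^2*d^6 + (-1)*c^2*d^8 + (2)*c^4 + (2)*c^4*d^2 + (-2)*c^4*d^4 + (-2)*c^4*d^6 + (2)*c^6 + (4)*c^6*d^2 + (2)*c^6*d^4 + (-1)*c^8 + (1)*c^8*d^2 + (-1)*c^10 + (-1)*b^2 + (-4)*b^2*d^2 + (-6)*b^2*d^4 + (-4)*b^2*d^6 + (-1)*b^2*d^8 + (4)*b^2*c^2 + (4)*b^2*c^2*d^2 +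 (-4)*b^2*c^2*d^4 + (-4)*b^2*c^2*d^6 + (6)*b^2*c^4 + (12)*b^2*c^4*d^2 + (6)*b^2*c^4*d^4 + (-4)*b^2*c^6 + (4)*b^2*c^6*d^2 + (-5)*b^2*c^8 + (2)*b^4 + (2)*b^4*d^2 + (-2)*b^4*d^4 + (-2)*b^4*d^6 + (6)*b^4*c^2 + (12)*b^4*c^2*d^2 + (6)*b^4*c^2*d^4 + (-6)*b^4*c^4 + (6)*b^4*c^4*d^2 + (-10)*b^4*c^6 + (2)*b^6 + (4)*b^6*d^2 + (2)*b^6*d^4 + (-4)*b^6*c^2 + (4)*b^6*c^2*d^2 + (-10)*b^6*c^4 + (-1)*b^8 + (1)*b^8*d^2 + (-5)*b^8*c^2 + (-1)*b^10 + (1)*a^2 + (-16)*a^2*d^2 + (18)*a^2*d^4 + (8)*a^2*d^6 + (5)*a^2*d^8 + (-20)*a^2*c^2*d^2 + (-8)*a^2*c^2*d^4 + (-4)*a^2*c^2*d^6 + (-2)*a^2*c^4 + (-6)*a^2*c^4*d^4 + (4)*a^2*c^6*d^2 + (1)*a^2*c^8 + (-20)*a^2*b^2*d^2 + (-8)*a^2*b^2*d^4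 + (-4)*a^2*b^2*d^6 + (-4)*a^2*b^2*c^2 + (-12)*a^2*b^2*c^2*d^4 + (12)*a^2*b^2*c^4*d^2 + (4)*a^2*b^2*c^6 + (-2)*a^2*b^4 + (-6)*a^2*b^4*d^4 + (12)*a^2*b^4*c^2*d^2 + (6)*a^2*b^4*c^4 + (4)*a^2*b^6*d^2 + (4)*a^2*b^6*c^2 + (1)*a^2*b^8 + (2)*a^4 + (14)*a^4*d^2 + (6)*a^4*d^4 + (10)*a^4*d^6 + (2)*a^4*c^2 + (-4)*a^4*c^2*d^2 + (-6)*a^4*c^2*d^4 + (2)*a^4*c^4 + (-6)*a^4*c^4*d^2 + (2)*a^4*c^6 + (2)*a^4*b^2 + (-4)*a^4*b^2*d^2 + (-6)*a^4*b^2*d^4 + (4)*a^4*b^2*c^2 + (-12)*a^4*b^2*c^2*d^2 + (6)*a^4*b^2*c^4 + (2)*a^4*b^4 + (-6)*a^4*b^4*d^2 + (6)*a^4*b^4*c^2 + (2)*a^4*b^6 + (-2)*a^6 + (10)*a^6*d^4 + (-4)*a^6*c^2*d^2 + (-2)*a^6*c^4 + (-4)*a^6*b^2*d^2 + (-4)*a^6*b^2*c^2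 + (-2)*a^6*b^4 + (-1)*a^8 + (5)*a^8*d^2 + (-1)*a^8*c^2 + (-1)*a^8*b^2 + (1)*a^10) * h
  have hdne : S.det ≠ 0 := by
    rw [hdet]
    have h1 := pow_ne_zero 2 ha
    have h2 := pow_ne_zero 4 hd
    positivity
  have hrankS : S.rank = 6 := by
    rw [Matrix.rank_of_isUnit S ((Matrix.isUnit_iff_isUnit_det S).mpr hdne.isUnit)]
    simp
  have hle : M₁.rank ≤ 6 := by
    simpa using M₁.rank_le_card_height
  have hge : 6 ≤ M₁.rank := by
    calc 6 = S.rank := hrankS.symm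
    _ = (M₁ * (Matrix.of fun (j : Fin 9) (k : Fin 6) => if j = (![0, 1, 3, 4, 6, 7] : Fin 6 → Fin 9) k then (1:ℝ) else 0)).rank := by
        rw [mul_sel, key]
    _ ≤ M₁.rank := Matrix.rank_mul_le_left M₁ _
  omega
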